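/- arXiv:0803.2990 — 2 statements merged into one kernel-verified Lean document; each statement's English description precedes it below -/
import Mathlib

section
/- Let R be a unique factorization domain, g a prime element of R, and u, v, s, t, a, c elements of R with v, t nonzero. Suppose u·v = s·t, that g^p divides u, that q is the largest natural number with g^q dividing v, that g does not divide s, and that a·v = c·t. Then g^p divides a. -/
/-- In a UFD, if `g` is prime, `u * v = s * t`, `g ^ p ∣ u`, `q` is the largest
natural number with `g ^ q ∣ v`, `g ∤ s` and `a * v = c * t`, then `g ^ p ∣ a`. -/
theorem stmt_4 {R : Type*} [CommRing R] [IsDomain R] [UniqueFactorizationMonoid R]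
    (g u v s t a c : R) (p q : ℕ) (hg : Prime g)
    (hv : v ≠ 0) (ht : t ≠ 0)
    (huv : u * v = s * t) (hpu : g ^ p ∣ u)
    (hqv : g ^ q ∣ v) (hqv' : ¬ g ^ (q + 1) ∣ v)
    (hgs : ¬ g ∣ s) (hav : a * v = c * t) :
    g ^ p ∣ a := by
  have hev : emultiplicity g v = (q : ℕ∞) := emultiplicity_eq_coe.mpr ⟨hqv, hqv'⟩
  have hes : emultiplicity g s = 0 := by
    rw [emultiplicity_eq_zero]; exact hgs
  have h1 : emultiplicity g u + emultiplicity g v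
      = emultiplicity g s + emultiplicity g t := by
    rw [← emultiplicity_mul hg, ← emultiplicity_mul hg, huv]
  have h2 : emultiplicity g a + emultiplicity g v
      = emultiplicity g c + emultiplicity g t := by
    rw [← emultiplicity_mul hg, ← emultiplicity_mul hg, hav]
  have heu : (p : ℕ∞) ≤ emultiplicity g u := le_emultiplicity_of_pow_dvd hpu
  have het : (p : ℕ∞) + q ≤ emultiplicity g t := by
    calc (p : ℕ∞) + q ≤ emultiplicity g u + emultiplicity g v := by
          rw [hev]; exact add_le_add_left heu _
      _ = emultiplicity g t := by rw [h1, hes, zero_add]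
  have key : (p : ℕ∞) + q ≤ emultiplicity g a + q := by
    calc (p : ℕ∞) + q ≤ emultiplicity g t := het
      _ ≤ emultiplicity g c + emultiplicity g t := le_add_self
      _ = emultiplicity g a + q := by rw [← h2, hev]
  have : (p : ℕ∞) ≤ emultiplicity g a :=
    (WithTop.add_le_add_iff_right (by exact_mod_cast WithTop.coe_ne_top)).mp key
  exact pow_dvd_of_le_emultiplicity this
end

section
/- Let R be a unique factorization domain (local ring of a smooth variety). Consider a skew-commutative cube of rank-one free R-modules with all edge maps multiplication by nonzero elements: edges out of the top vertex are f¹₂₃, f²₁₃, f³₁₂, middle edges f^i_j (from vertex {i,j} in direction i, landing at {j}), and bottom edges f^i. Suppose the commutativity relations f¹₂₃ · f³₂ = f³₁₂ · f¹₂ (and its cyclic analogues) hold, and let d = gcd(f¹₂₃, f²₁₃, f³₁₂). Then H^{-2} of the total complex is isomorphic to R/(d) · (1/d) ≅ R/(d). In particular, if f¹₂₃, f²₁₃, f³₁₂ have no common prime factor then H^{-2} = 0. -/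
private lemma cross_cancel {R : Type*} [CommRing R] [IsDomain R]
    {c c' Ai Aj xi xj : R} (hc : c ≠ 0)
    (h1 : c * xj + c' * xi = 0) (h2 : c * Aj + c' * Ai = 0) :
    Aj * xi = Ai * xj := by
  apply mul_left_cancel₀ hc
  linear_combination xi * h2 - Ai * h1

/-- For a skew-commutative cube of rank-one free modules over a UFD `R` with all
edge elements nonzero, `H⁻²` of the total complex is isomorphic to `R/(d)` where
`d = gcd` of the three top edge elements; in particular it vanishes when those
three elements have no common prime factor.  Here `δ₃ : R → R³` is the
differential out of the top vertex and `δ₂ : R³ → R³` the next differential. -/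
theorem stmt_7 {R : Type*} [CommRing R] [IsDomain R] [UniqueFactorizationMonoid R]
    (e : Finset (Fin 3) → Fin 3 → R)
    (hne : ∀ (v : Finset (Fin 3)) (i : Fin 3), i ∉ v → e v i ≠ 0)
    (hskew : ∀ (v : Finset (Fin 3)) (i j : Fin 3), i ∉ v → j ∉ v → i ≠ j →
      e v i * e (insert i v) j + e v j * e (insert j v) i = 0)
    (d : R)
    (hd : ∀ k : Fin 3, d ∣ e (Finset.univ.erase k) k)
    (hd' : ∀ c : R, (∀ k : Fin 3, c ∣ e (Finset.univ.erase k) k) → c ∣ d)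
    (δ₃ : R →ₗ[R] (Fin 3 → R))
    (hδ₃ : ∀ (r : R) (k : Fin 3), δ₃ r k = e (Finset.univ.erase k) k * r)
    (δ₂ : (Fin 3 → R) →ₗ[R] (Fin 3 → R))
    (hδ₂ : ∀ (x : Fin 3 → R) (j : Fin 3),
      δ₂ x j = ∑ i ∈ Finset.univ.erase j, e {j} i * x (-(i + j))) :
    Nonempty
      ((LinearMap.ker δ₂ ⧸
          (LinearMap.range δ₃).comap (LinearMap.ker δ₂).subtype)
        ≃ₗ[R] R ⧸ (Ideal.span {d} : Ideal R)) ∧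
    ((∀ p : R, Prime p → ¬ (∀ k : Fin 3, p ∣ e (Finset.univ.erase k) k)) →
      ∀ x y : (LinearMap.ker δ₂ ⧸
          (LinearMap.range δ₃).comap (LinearMap.ker δ₂).subtype), x = y) := by
  classical
  letI : StrongNormalizationMonoid R := UniqueFactorizationMonoid.normalizationMonoid
  letI : StrongNormalizedGCDMonoid R := UniqueFactorizationMonoid.toStrongNormalizedGCDMonoid R
  -- abbreviation for the top edges
  set A : Fin 3 → R := fun k => e (Finset.univ.erase k) k with hA
  have hAne : ∀ k, A k ≠ 0 := fun k => hne _ _ (Finset.notMem_erase k _)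
  -- component formulas for δ₂
  have c0 : ∀ x : Fin 3 → R, δ₂ x 0 = e {0} 1 * x 2 + e {0} 2 * x 1 := by
    intro x
    rw [hδ₂, show (Finset.univ.erase (0:Fin 3)) = {1,2} from by decide,
      Finset.sum_insert (by decide), Finset.sum_singleton,
      show (-(1+0):Fin 3) = 2 from by decide, show (-(2+0):Fin 3) = 1 from by decide]
  have c1 : ∀ x : Fin 3 → R, δ₂ x 1 = e {1} 0 * x 2 + e {1} 2 * x 0 := by
    intro x
    rw [hδ₂, show (Finset.univ.erase (1:Fin 3)) = {0,2} from by decide,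
      Finset.sum_insert (by decide), Finset.sum_singleton,
      show (-(0+1):Fin 3) = 2 from by decide, show (-(2+1):Fin 3) = 0 from by decide]
  have c2 : ∀ x : Fin 3 → R, δ₂ x 2 = e {2} 0 * x 1 + e {2} 1 * x 0 := by
    intro x
    rw [hδ₂, show (Finset.univ.erase (2:Fin 3)) = {0,1} from by decide,
      Finset.sum_insert (by decide), Finset.sum_singleton,
      show (-(0+2):Fin 3) = 1 from by decide, show (-(1+2):Fin 3) = 0 from by decide]
  -- the commutation relations involving the top edges
  have r0 : e {0} 1 * A 2 + e {0} 2 * A 1 = 0 := by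
    have h := hskew {0} 1 2 (by decide) (by decide) (by decide)
    rwa [show ({1,0} : Finset (Fin 3)) = Finset.univ.erase 2 from by decide,
      show ({2,0} : Finset (Fin 3)) = Finset.univ.erase 1 from by decide] at h
  have r1 : e {1} 0 * A 2 + e {1} 2 * A 0 = 0 := by
    have h := hskew {1} 0 2 (by decide) (by decide) (by decide)
    rwa [show ({0,1} : Finset (Fin 3)) = Finset.univ.erase 2 from by decide,
      show ({2,1} : Finset (Fin 3)) = Finset.univ.erase 0 from by decide] at h
  have r2 : e {2} 0 * A 1 + e {2} 1 * A 0 = 0 := by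
    have h := hskew {2} 0 1 (by decide) (by decide) (by decide)
    rwa [show ({0,2} : Finset (Fin 3)) = Finset.univ.erase 1 from by decide,
      show ({1,2} : Finset (Fin 3)) = Finset.univ.erase 0 from by decide] at h
  -- d is nonzero
  have hdne : d ≠ 0 := by
    rintro rfl
    exact hAne 0 (zero_dvd_iff.mp (hd 0))
  -- the vector w with A = d • w
  have hw0 : ∀ k, ∃ w, A k = d * w := fun k => hd k
  set W : Fin 3 → R := fun k => (hw0 k).choose with hWdef
  have hW : ∀ k, A k = d * W k := fun k => (hw0 k).choose_spec
  have hWne : ∀ k, W k ≠ 0 := by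
    intro k h
    exact hAne k (by rw [hW k, h, mul_zero])
  -- A is in the kernel of δ₂
  have hAker : δ₂ A = 0 := by
    funext j
    fin_cases j
    · simpa using (c0 A).trans r0
    · simpa using (c1 A).trans r1
    · simpa using (c2 A).trans r2
  -- W is in the kernel of δ₂
  have hWker : δ₂ W = 0 := by
    have h : δ₂ (d • W) = 0 := by
      rw [show d • W = A from funext fun k => by simp [hW k], hAker]
    funext j
    have := congrFun h j
    rw [map_smul] at this
    simpa [hdne] using this
  -- gcd of W's is a unit
  have hgcd : IsUnit (gcd (W 0) (gcd (W 1) (W 2))) := by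
    set g := gcd (W 0) (gcd (W 1) (W 2)) with hg
    have hdvd : ∀ k : Fin 3, g ∣ W k := by
      intro k
      fin_cases k
      · exact gcd_dvd_left _ _
      · exact dvd_trans (gcd_dvd_right _ _) (gcd_dvd_left _ _)
      · exact dvd_trans (gcd_dvd_right _ _) (gcd_dvd_right _ _)
    have : d * g ∣ d := hd' _ (fun k => by rw [show e (Finset.univ.erase k) k = A k from rfl, hW k]; exact mul_dvd_mul_left d (hdvd k))
    have h1 : g ∣ 1 := by
      rcases this with ⟨c, hc⟩
      refine ⟨c, mul_left_cancel₀ hdne ?_⟩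
      rw [mul_one, ← mul_assoc]; exact hc
    exact isUnit_of_dvd_one h1
  -- every element of the kernel is a multiple of W
  have hkermem : ∀ x : Fin 3 → R, δ₂ x = 0 → ∃ r : R, x = r • W := by
    intro x hx
    have hx0 : e {0} 1 * x 2 + e {0} 2 * x 1 = 0 := by
      have h := congrFun hx 0; rw [c0] at h; simpa using h
    have hx1 : e {1} 0 * x 2 + e {1} 2 * x 0 = 0 := by
      have h := congrFun hx 1; rw [c1] at h; simpa using h
    have hx2 : e {2} 0 * x 1 + e {2} 1 * x 0 = 0 := by
      have h := congrFun hx 2; rw [c2] at h; simpa using h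
    -- cross relations  A i * x j = A j * x i
    have cr21 : A 2 * x 1 = A 1 * x 2 :=
      cross_cancel (hne {0} 1 (by decide)) hx0 r0
    have cr20 : A 2 * x 0 = A 0 * x 2 :=
      cross_cancel (hne {1} 0 (by decide)) hx1 r1
    have cr10 : A 1 * x 0 = A 0 * x 1 :=
      cross_cancel (hne {2} 0 (by decide)) hx2 r2
    -- in terms of W
    have w10 : W 1 * x 0 = W 0 * x 1 := by
      apply mul_left_cancel₀ hdne
      rw [← mul_assoc, ← mul_assoc, ← hW 1, ← hW 0, cr10]
    have w20 : W 2 * x 0 = W 0 * x 2 := by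
      apply mul_left_cancel₀ hdne
      rw [← mul_assoc, ← mul_assoc, ← hW 2, ← hW 0, cr20]
    -- W 0 divides x 0
    have hdvd : W 0 ∣ x 0 := by
      have h1 : W 0 ∣ W 1 * x 0 := ⟨x 1, w10.symm ▸ rfl⟩
      have h2 : W 0 ∣ W 2 * x 0 := ⟨x 2, w20.symm ▸ rfl⟩
      have h3 : W 0 ∣ gcd (W 1 * x 0) (W 2 * x 0) := dvd_gcd h1 h2
      rw [gcd_mul_right] at h3
      have h4 : W 0 ∣ gcd (W 1) (W 2) * x 0 :=
        h3.trans (mul_dvd_mul_left _ (normalize_dvd_iff.mpr dvd_rfl))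
      have h5 : W 0 ∣ gcd (W 0 * x 0) (gcd (W 1) (W 2) * x 0) :=
        dvd_gcd (Dvd.intro _ rfl) h4
      rw [gcd_mul_right] at h5
      calc W 0 ∣ gcd (W 0) (gcd (W 1) (W 2)) * normalize (x 0) := h5
        _ ∣ 1 * x 0 := mul_dvd_mul hgcd.dvd (normalize_dvd_iff.mpr dvd_rfl)
        _ = x 0 := one_mul _
    obtain ⟨r, hr⟩ := hdvd
    refine ⟨r, funext fun k => ?_⟩
    fin_cases k
    · simpa [mul_comm] using hr
    · have := w10
      rw [hr] at this
      have : W 0 * x 1 = W 0 * (r * W 1) := by rw [← this]; ring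
      simpa using mul_left_cancel₀ (hWne 0) this
    · have := w20
      rw [hr] at this
      have : W 0 * x 2 = W 0 * (r * W 2) := by rw [← this]; ring
      simpa using mul_left_cancel₀ (hWne 0) this
  -- the linear equivalence R ≃ ker δ₂,  r ↦ r • W
  have hWmem : W ∈ LinearMap.ker δ₂ := hWker
  let Φ : R →ₗ[R] ↥(LinearMap.ker δ₂) :=
    { toFun := fun r => ⟨r • W, by
        rw [LinearMap.mem_ker, map_smul, hWker, smul_zero]⟩
      map_add' := fun r s => by ext k; simp [add_mul]
      map_smul' := fun r s => by ext k; simp [mul_assoc] }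
  have hΦbij : Function.Bijective Φ := by
    constructor
    · intro r s h
      have h0 : r • W = s • W := congrArg Subtype.val h
      have := congrFun h0 0
      simp only [Pi.smul_apply, smul_eq_mul] at this
      exact mul_right_cancel₀ (hWne 0) this
    · rintro ⟨x, hx⟩
      obtain ⟨r, hr⟩ := hkermem x (LinearMap.mem_ker.mp hx)
      exact ⟨r, Subtype.ext hr.symm⟩
  let Ψ : R ≃ₗ[R] ↥(LinearMap.ker δ₂) := LinearEquiv.ofBijective Φ hΦbij
  have hmap : Submodule.map (Ψ : R →ₗ[R] ↥(LinearMap.ker δ₂)) (Ideal.span {d} : Ideal R)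
      = (LinearMap.range δ₃).comap (LinearMap.ker δ₂).subtype := by
    ext z
    simp only [Submodule.mem_map, Submodule.mem_comap, LinearMap.mem_range,
      Submodule.coe_subtype]
    constructor
    · rintro ⟨r, hrmem, rfl⟩
      obtain ⟨s, rfl⟩ := Ideal.mem_span_singleton.mp hrmem
      refine ⟨s, ?_⟩
      show δ₃ s = (d * s) • W
      funext k
      rw [hδ₃]
      show A k * s = (d * s) • W k
      rw [hW k]
      simp [mul_comm, mul_assoc, mul_left_comm]
    · rintro ⟨s, hs⟩
      refine ⟨d * s, Ideal.mem_span_singleton.mpr ⟨s, rfl⟩, ?_⟩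
      apply Subtype.ext
      show (d * s) • W = (z : Fin 3 → R)
      rw [← hs]
      funext k
      rw [hδ₃]
      show (d * s) • W k = A k * s
      rw [hW k]
      simp [mul_comm, mul_assoc, mul_left_comm]
  let L := Submodule.Quotient.equiv (Ideal.span {d} : Ideal R)
    ((LinearMap.range δ₃).comap (LinearMap.ker δ₂).subtype) Ψ hmap
  refine ⟨⟨L.symm⟩, ?_⟩
  · intro hnoprime x y
    -- d is a unit
    have hdu : IsUnit d := by
      by_contra hdnu
      obtain ⟨p, hpirr, hpd⟩ := WfDvdMonoid.exists_irreducible_factor hdnu hdne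
      exact hnoprime p (UniqueFactorizationMonoid.irreducible_iff_prime.mp hpirr)
        (fun k => hpd.trans (hd k))
    have htop : (Ideal.span {d} : Ideal R) = ⊤ :=
      Ideal.span_singleton_eq_top.mpr hdu
    haveI : Subsingleton (R ⧸ (Ideal.span {d} : Ideal R)) :=
      Submodule.Quotient.subsingleton_iff.mpr htop
    have := Subsingleton.elim (L.symm x) (L.symm y)
    exact L.symm.injective this
end
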